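/- The series ∑_{k=1}^∞ (1/k) · C(2k,k) / 4^k equals 2·ln(2). -/

import Mathlib

open scoped BigOperators
open Real

noncomputable def cb (k : ℕ) : ℝ := (Nat.choose (2*k) k : ℝ) / 4^k

noncomputable def H (k : ℕ) : ℝ := ∑ j ∈ Finset.range k, (1:ℝ)/(j+1)

noncomputable def oh (k : ℕ) : ℝ := ∑ j ∈ Finset.range k, (1:ℝ)/(2*j+1)

lemma cb_zero : cb 0 = 1 := by simp [cb]

lemma cb_pos (n : ℕ) : 0 < cb n := by
  have h := Nat.choose_pos (show n ≤ 2*n by omega)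
  have h4 : (0:ℝ) < 4^n := by positivity
  exact div_pos (by exact_mod_cast h) h4

lemma cb_rec (n : ℕ) : cb (n+1) = (2*n+1)/(2*n+2) * cb n := by
  have h := Nat.succ_mul_centralBinom_succ n
  have h' : ((n:ℝ)+1) * (Nat.choose (2*(n+1)) (n+1)) = 2 * (2*n+1) * (Nat.choose (2*n) n) := by
    have := congrArg (fun m : ℕ => (m : ℝ)) h
    push_cast [Nat.centralBinom] at this
    linarith [this]
  have hn : ((n:ℝ)+1) ≠ 0 := by positivity
  simp only [cb]
  rw [pow_succ]
  field_simp
  nlinarith [h', pow_pos (show (0:ℝ) < 4 by norm_num) n]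

lemma cb_le_one (n : ℕ) : cb n ≤ 1 := by
  induction n with
  | zero => simp [cb_zero]
  | succ n ih =>
    rw [cb_rec]
    have h1 : (2*(n:ℝ)+1)/(2*n+2) ≤ 1 := by
      rw [div_le_one (by positivity)]; linarith
    calc (2*(n:ℝ)+1)/(2*n+2) * cb n ≤ 1 * cb n := by
          exact mul_le_mul_of_nonneg_right h1 (cb_pos n).le
      _ ≤ 1 := by rw [one_mul]; exact ih

lemma cb_sq (n : ℕ) : cb n ^ 2 * (2*n+1) ≤ 1 := by
  induction n with
  | zero => simp [cb_zero]
  | succ n ih =>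
    push_cast
    rw [cb_rec]
    have h2 : (0:ℝ) < 2*n+2 := by positivity
    rw [mul_pow]
    have key : ((2*(n:ℝ)+1)/(2*n+2))^2 * (2*((n:ℝ)+1)+1) ≤ (2*n+1) := by
      rw [div_pow, div_mul_eq_mul_div, div_le_iff₀ (by positivity)]
      push_cast
      nlinarith [sq_nonneg ((n:ℝ))]
    calc ((2*(n:ℝ)+1)/(2*n+2))^2 * cb n ^2 * (2*((n:ℝ)+1)+1)
        = cb n ^2 * (((2*(n:ℝ)+1)/(2*n+2))^2 * (2*(n+1)+1)) := by push_cast; ring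
      _ ≤ cb n ^2 * (2*n+1) := by
          apply mul_le_mul_of_nonneg_left _ (sq_nonneg _)
          push_cast at key ⊢; exact key
      _ ≤ 1 := ih

lemma sym (n : ℕ) : 2 * ∑ i ∈ Finset.range (n+1), (i:ℝ) * (cb i * cb (n-i))
    = n * ∑ i ∈ Finset.range (n+1), cb i * cb (n-i) := by
  have h := Finset.sum_range_reflect (fun i => (i:ℝ) * (cb i * cb (n-i))) (n+1)
  simp only [Nat.add_sub_cancel] at h
  have : 2 * ∑ i ∈ Finset.range (n+1), (i:ℝ) * (cb i * cb (n-i))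
      = ∑ i ∈ Finset.range (n+1), ((n-i:ℕ):ℝ) * (cb (n-i) * cb (n-(n-i)))
        + ∑ i ∈ Finset.range (n+1), (i:ℝ) * (cb i * cb (n-i)) := by
    rw [h]; ring
  rw [this, ← Finset.sum_add_distrib, Finset.mul_sum]
  apply Finset.sum_congr rfl
  intro i hi
  have hin : i ≤ n := by
    have := Finset.mem_range.mp hi; omega
  have h1 : n - (n - i) = i := by omega
  have h2 : ((n-i:ℕ):ℝ) = (n:ℝ) - i := by
    push_cast [hin]; ring
  rw [h1, h2, mul_comm (cb (n-i)) (cb i)]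
  ring

lemma conv (n : ℕ) : ∑ i ∈ Finset.range (n+1), cb i * cb (n-i) = 1 := by
  induction n with
  | zero => simp [cb_zero]
  | succ n ih =>
    have key : ((n:ℝ)+1) * ∑ i ∈ Finset.range (n+2), cb i * cb (n+1-i)
        = ((n:ℝ)+1) * ∑ i ∈ Finset.range (n+1), cb i * cb (n-i) := by
      have hA := sym (n+1)
      push_cast at hA
      -- shift
      have hshift : ∑ i ∈ Finset.range (n+2), (i:ℝ) * (cb i * cb (n+1-i))
          = ∑ i ∈ Finset.range (n+1), ((i:ℝ)+1) * (cb (i+1) * cb (n-i)) := by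
        rw [Finset.sum_range_succ' (fun i => (i:ℝ) * (cb i * cb (n+1-i))) (n+1)]
        simp only [Nat.cast_zero, zero_mul, add_zero]
        apply Finset.sum_congr rfl
        intro i hi
        have : n + 1 - (i+1) = n - i := by omega
        rw [this]
        push_cast
        ring
      have hterm : ∀ i : ℕ, ((i:ℝ)+1) * (cb (i+1) * cb (n-i))
          = ((2*i+1)/2) * (cb i * cb (n-i)) := by
        intro i
        rw [cb_rec i]
        have : (0:ℝ) < 2*(i:ℝ)+2 := by positivity
        field_simp
      have hsym := sym n
      calc ((n:ℝ)+1) * ∑ i ∈ Finset.range (n+2), cb i * cb (n+1-i)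
          = 2 * ∑ i ∈ Finset.range (n+2), (i:ℝ) * (cb i * cb (n+1-i)) := by
            linarith [hA]
        _ = 2 * ∑ i ∈ Finset.range (n+1), ((2*(i:ℝ)+1)/2) * (cb i * cb (n-i)) := by
            rw [hshift]
            congr 1
            exact Finset.sum_congr rfl (fun i _ => hterm i)
        _ = 2 * ∑ i ∈ Finset.range (n+1), (i:ℝ) * (cb i * cb (n-i))
            + ∑ i ∈ Finset.range (n+1), cb i * cb (n-i) := by
            rw [Finset.mul_sum, Finset.mul_sum, ← Finset.sum_add_distrib]
            apply Finset.sum_congr rfl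
            intro i _
            ring
        _ = ((n:ℝ)+1) * ∑ i ∈ Finset.range (n+1), cb i * cb (n-i) := by
            rw [hsym]; ring
    have hpos : ((n:ℝ)+1) ≠ 0 := by positivity
    have := mul_left_cancel₀ hpos key
    rw [this, ih]

lemma summable_norm_cb_pow {x : ℝ} (hx : |x| < 1) :
    Summable (fun k => ‖cb k * x^k‖) := by
  apply Summable.of_nonneg_of_le (fun k => norm_nonneg _)
    (fun k => ?_) (summable_geometric_of_lt_one (abs_nonneg x) hx)
  rw [norm_mul, norm_pow]
  calc ‖cb k‖ * ‖x‖^k ≤ 1 * ‖x‖^k := by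
        apply mul_le_mul_of_nonneg_right _ (by positivity)
        rw [Real.norm_eq_abs, abs_of_pos (cb_pos k)]
        exact cb_le_one k
    _ = |x|^k := by rw [one_mul, Real.norm_eq_abs]

lemma summable_cb_pow {x : ℝ} (hx : |x| < 1) : Summable (fun k => cb k * x^k) :=
  (summable_norm_cb_pow hx).of_norm

lemma g_val {x : ℝ} (h0 : 0 ≤ x) (h1 : x < 1) :
    ∑' k, cb k * x^k = (Real.sqrt (1-x))⁻¹ := by
  have hx : |x| < 1 := by rwa [abs_of_nonneg h0]
  have hn := summable_norm_cb_pow hx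
  have hsq : (∑' k, cb k * x^k) * (∑' k, cb k * x^k) = (1-x)⁻¹ := by
    rw [tsum_mul_tsum_eq_tsum_sum_range_of_summable_norm hn hn]
    rw [← tsum_geometric_of_lt_one h0 h1]
    apply tsum_congr
    intro n
    have : ∑ k ∈ Finset.range (n+1), cb k * x^k * (cb (n-k) * x^(n-k))
        = ∑ k ∈ Finset.range (n+1), (cb k * cb (n-k)) * x^n := by
      apply Finset.sum_congr rfl
      intro k hk
      have hkn : k ≤ n := by have := Finset.mem_range.mp hk; omega
      have : x^k * x^(n-k) = x^n := by
        rw [← pow_add]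
        congr 1
        omega
      rw [← this]; ring
    rw [this, ← Finset.sum_mul, conv n, one_mul]
  have hnn : 0 ≤ ∑' k, cb k * x^k :=
    tsum_nonneg (fun k => mul_nonneg (cb_pos k).le (pow_nonneg h0 k))
  have : ∑' k, cb k * x^k = Real.sqrt ((1-x)⁻¹) := by
    rw [← hsq, ← pow_two, Real.sqrt_sq hnn]
  rw [this, Real.sqrt_inv]

noncomputable def Fcb : ℝ → ℝ := fun x => ∑' k : ℕ, (1/((k:ℝ)+1)) * cb (k+1) * x^(k+1)

lemma hasDerivAt_Fcb {x : ℝ} (hx : |x| < 1) :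
    HasDerivAt Fcb (∑' k : ℕ, cb (k+1) * x^k) x := by
  set r : ℝ := (1 + |x|)/2 with hr
  have hr1 : r < 1 := by rw [hr]; linarith
  have hxr : |x| < r := by rw [hr]; linarith
  have hr0 : 0 ≤ r := by rw [hr]; positivity
  apply hasDerivAt_tsum_of_isPreconnected
    (u := fun n => r^n)
    (t := Metric.ball (0:ℝ) r)
    (g' := fun n y => cb (n+1) * y^n)
    (y₀ := 0)
    (summable_geometric_of_lt_one hr0 hr1)
    Metric.isOpen_ball
    (convex_ball (0:ℝ) r).isPreconnected
  · intro n y _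
    have h1 := (hasDerivAt_pow (n+1) y).const_mul ((1/((n:ℝ)+1)) * cb (n+1))
    convert h1 using 1
    · rfl
    have : ((n:ℝ)+1) ≠ 0 := by positivity
    push_cast
    field_simp
  · intro n y hy
    rw [Real.norm_eq_abs, abs_mul, abs_pow]
    have h1 : |cb (n+1)| ≤ 1 := by
      rw [abs_of_pos (cb_pos _)]; exact cb_le_one _
    have h2 : |y| ≤ r := by
      have := Metric.mem_ball.mp hy
      rw [Real.dist_eq, sub_zero] at this
      linarith
    calc |cb (n+1)| * |y|^n ≤ 1 * r^n := by
          apply mul_le_mul h1 (pow_le_pow_left₀ (abs_nonneg _) h2 n) (by positivity) one_pos.le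
      _ = r^n := one_mul _
  · simp only [Metric.mem_ball, Real.dist_eq, sub_zero, abs_zero]
    first
    | exact hxr
    | exact lt_of_le_of_lt (abs_nonneg x) hxr
  · apply Summable.congr summable_zero
    intro n
    simp
  · simp only [Metric.mem_ball, Real.dist_eq, sub_zero, abs_zero]
    first
    | exact hxr
    | exact lt_of_le_of_lt (abs_nonneg x) hxr

lemma D_eq {y : ℝ} (h0 : 0 ≤ y) (h1 : y < 1) :
    ∑' k : ℕ, cb (k+1) * y^k = (Real.sqrt (1-y) * (1 + Real.sqrt (1-y)))⁻¹ := by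
  rcases eq_or_lt_of_le h0 with h | hy0
  · rw [← h]
    have : ∑' k : ℕ, cb (k+1) * (0:ℝ)^k = cb 1 := by
      rw [tsum_eq_single 0 (fun k hk => by simp [zero_pow hk])]
      simp
    rw [this]
    have : cb 1 = 1/2 := by norm_num [cb]
    rw [this]
    norm_num
  · have hx : |y| < 1 := by rw [abs_of_nonneg h0]; exact h1
    have hs : Summable (fun k => cb k * y^k) := summable_cb_pow hx
    have hshift : ∑' k : ℕ, cb (k+1) * y^(k+1) = (Real.sqrt (1-y))⁻¹ - 1 := by
      have h2 := Summable.tsum_eq_zero_add hs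
      rw [g_val h0 h1] at h2
      simp only [pow_zero, mul_one, cb_zero] at h2
      linarith
    have hmul : (∑' k : ℕ, cb (k+1) * y^k) * y = (Real.sqrt (1-y))⁻¹ - 1 := by
      rw [← tsum_mul_right, ← hshift]
      apply tsum_congr
      intro k
      rw [pow_succ]
      ring
    have hsp : 0 < Real.sqrt (1-y) := Real.sqrt_pos.mpr (by linarith)
    have hsq : Real.sqrt (1-y)^2 = 1-y := Real.sq_sqrt (by linarith)
    have h1s : 0 < 1 + Real.sqrt (1-y) := by linarith
    have hyne : y ≠ 0 := ne_of_gt hy0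
    have hmul2 : (∑' k : ℕ, cb (k+1) * y^k) * y * Real.sqrt (1-y)
        = 1 - Real.sqrt (1-y) := by
      calc (∑' k : ℕ, cb (k+1) * y^k) * y * Real.sqrt (1-y)
          = ((Real.sqrt (1-y))⁻¹ - 1) * Real.sqrt (1-y) := by rw [hmul]
        _ = 1 - Real.sqrt (1-y) := by field_simp
    have hs1 : Real.sqrt (1-y) < 1 := by nlinarith [hsq]
    have hsne : (1:ℝ) - Real.sqrt (1-y) ≠ 0 := by linarith
    have hkey : (∑' k : ℕ, cb (k+1) * y^k) * (Real.sqrt (1-y) * (1 + Real.sqrt (1-y)))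
        * (1 - Real.sqrt (1-y)) = 1 * (1 - Real.sqrt (1-y)) := by
      linear_combination hmul2 - (∑' k : ℕ, cb (k+1) * y^k) * Real.sqrt (1-y) * hsq
    have hcancel := mul_right_cancel₀ hsne hkey
    exact eq_inv_of_mul_eq_one_left hcancel

lemma phi_deriv {t : ℝ} (ht : t < 1) :
    HasDerivAt (fun y : ℝ => -2 * Real.log (1 + Real.sqrt (1-y)) + 2 * Real.log 2)
      ((Real.sqrt (1-t) * (1 + Real.sqrt (1-t)))⁻¹) t := by
  have hpos : (0:ℝ) < 1 - t := by linarith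
  have hsp : 0 < Real.sqrt (1-t) := Real.sqrt_pos.mpr hpos
  have h1 : HasDerivAt (fun y : ℝ => 1 - y) (-1) t := by
    simpa using (hasDerivAt_id t).const_sub 1
  have h2 : HasDerivAt (fun y : ℝ => Real.sqrt (1-y)) (1 / (2 * Real.sqrt (1-t)) * (-1)) t :=
    (Real.hasDerivAt_sqrt (ne_of_gt hpos)).comp t h1
  have h3 : HasDerivAt (fun y : ℝ => 1 + Real.sqrt (1-y)) (1 / (2 * Real.sqrt (1-t)) * (-1)) t :=
    h2.const_add 1
  have h4 : (1 + Real.sqrt (1-t)) ≠ 0 := by positivity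
  have h5 := (h3.log h4).const_mul (-2)
  have h6 : HasDerivAt (fun y : ℝ => -2 * Real.log (1 + Real.sqrt (1-y)))
      (-2 * (1 / (2 * Real.sqrt (1-t)) * (-1) / (1 + Real.sqrt (1-t)))) t := h5
  have heq : -2 * (1 / (2 * Real.sqrt (1-t)) * (-1) / (1 + Real.sqrt (1-t)))
      = (Real.sqrt (1-t) * (1 + Real.sqrt (1-t)))⁻¹ := by
    field_simp
  rw [heq] at h6
  exact h6.add_const _

lemma F_val {x : ℝ} (h0 : 0 ≤ x) (h1 : x < 1) :
    Fcb x = 2 * Real.log 2 - 2 * Real.log (1 + Real.sqrt (1-x)) := by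
  have key := eq_of_has_deriv_right_eq
    (f := Fcb)
    (g := fun y : ℝ => -2 * Real.log (1 + Real.sqrt (1-y)) + 2 * Real.log 2)
    (f' := fun y : ℝ => (Real.sqrt (1-y) * (1 + Real.sqrt (1-y)))⁻¹)
    (a := 0) (b := x)
    (fun y hy => by
      have hy0 : 0 ≤ y := hy.1
      have hy1 : y < 1 := lt_trans hy.2 h1
      have := hasDerivAt_Fcb (x := y) (by rw [abs_of_nonneg hy0]; exact hy1)
      rw [D_eq hy0 hy1] at this
      exact this.hasDerivWithinAt)
    (fun y hy => (phi_deriv (lt_trans hy.2 h1)).hasDerivWithinAt)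
    (fun y hy => by
      have hy0 : 0 ≤ y := hy.1
      have hy1 : y < 1 := lt_of_le_of_lt hy.2 h1
      exact (hasDerivAt_Fcb (x := y) (by rw [abs_of_nonneg hy0]; exact hy1)).continuousAt.continuousWithinAt)
    (fun y hy => (phi_deriv (lt_of_le_of_lt hy.2 h1)).continuousAt.continuousWithinAt)
    (by
      have hF0 : Fcb 0 = 0 := by
        unfold Fcb
        rw [tsum_eq_single 0 (fun k hk => by simp [zero_pow])]
        simp
      rw [hF0]
      show (0:ℝ) = -2 * Real.log (1 + Real.sqrt (1-(0:ℝ))) + 2 * Real.log 2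
      rw [show (1:ℝ) - 0 = 1 by norm_num, Real.sqrt_one, show (1:ℝ)+1 = 2 by norm_num]
      ring)
    x (Set.mem_Icc.mpr ⟨h0, le_refl x⟩)
  rw [key]
  ring

lemma cb_bound (k : ℕ) : cb (k+1) ≤ (Real.sqrt ((k:ℝ)+1))⁻¹ := by
  have h1 := cb_sq (k+1)
  have hp : (0:ℝ) < (k:ℝ)+1 := by positivity
  have h2 : cb (k+1)^2 ≤ ((k:ℝ)+1)⁻¹ := by
    have h3 : ((k:ℝ)+1) ≤ 2*((k:ℕ)+1:ℕ)+1 := by push_cast; linarith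
    have h4 : cb (k+1)^2 * ((k:ℝ)+1) ≤ 1 := by
      calc cb (k+1)^2 * ((k:ℝ)+1) ≤ cb (k+1)^2 * (2*((k:ℕ)+1:ℕ)+1) := by
            apply mul_le_mul_of_nonneg_left _ (sq_nonneg _)
            push_cast
            linarith
        _ ≤ 1 := h1
    rw [← le_div_iff₀ hp] at h4
    rwa [one_div] at h4
  have h5 : cb (k+1) ≤ Real.sqrt (((k:ℝ)+1)⁻¹) := by
    rw [← Real.sqrt_sq (cb_pos (k+1)).le]
    exact Real.sqrt_le_sqrt h2
  rwa [Real.sqrt_inv] at h5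

lemma summable_a : Summable (fun k : ℕ => (1/((k:ℝ)+1)) * cb (k+1)) := by
  have hmaj : Summable (fun k : ℕ => (((k:ℝ)+1) ^ ((3:ℝ)/2))⁻¹) := by
    have h := (Real.summable_nat_rpow_inv (p := (3:ℝ)/2)).mpr (by norm_num)
    have h2 := (summable_nat_add_iff 1).mpr h
    apply h2.congr
    intro k
    push_cast
    norm_num
  apply Summable.of_nonneg_of_le _ _ hmaj
  · intro k
    have := cb_pos (k+1)
    positivity
  · intro k
    have hp : (0:ℝ) < (k:ℝ)+1 := by positivity
    have hsplit : ((k:ℝ)+1) ^ ((3:ℝ)/2) = ((k:ℝ)+1) * Real.sqrt ((k:ℝ)+1) := by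
      rw [Real.sqrt_eq_rpow, show ((3:ℝ)/2) = 1 + 1/2 by norm_num, Real.rpow_add hp,
        Real.rpow_one]
    rw [hsplit, mul_inv]
    rw [one_div]
    exact mul_le_mul_of_nonneg_left (cb_bound k) (by positivity)

theorem stmt_0 : ∑' k : ℕ, (1/((k:ℝ)+1)) * cb (k+1) = 2 * Real.log 2 := by
  set f : ℕ → ℝ := fun k => (1/((k:ℝ)+1)) * cb (k+1) with hf
  have hsum := summable_a
  have habel : Filter.Tendsto (fun x : ℝ => ∑' n, f n * x ^ n) (nhdsWithin 1 (Set.Iio 1))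
      (nhds (∑' k, f k)) :=
    Real.tendsto_tsum_powerSeries_nhdsWithin_lt hsum.hasSum.tendsto_sum_nat
  have heq : ∀ x ∈ Set.Ioo (0:ℝ) 1, (∑' n, f n * x ^ n)
      = (2*Real.log 2 - 2*Real.log (1+Real.sqrt (1-x)))/x := by
    intro x hx
    obtain ⟨hx0, hx1⟩ := hx
    have hF : Fcb x = 2*Real.log 2 - 2*Real.log (1+Real.sqrt (1-x)) := F_val hx0.le hx1
    have hmul : (∑' n, f n * x^n) * x = Fcb x := by
      rw [← tsum_mul_right]
      apply tsum_congr
      intro k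
      simp only [hf, Fcb]
      rw [pow_succ]
      ring
    rw [hF] at hmul
    rw [eq_div_iff (ne_of_gt hx0)]
    exact hmul
  have hG1 : ((2*Real.log 2 - 2*Real.log (1+Real.sqrt (1-(1:ℝ))))/(1:ℝ)) = 2*Real.log 2 := by
    norm_num
  have hlim2 : Filter.Tendsto (fun x : ℝ => (2*Real.log 2 - 2*Real.log (1+Real.sqrt (1-x)))/x)
      (nhdsWithin 1 (Set.Iio 1)) (nhds (2*Real.log 2)) := by
    have hc : ContinuousAt (fun x : ℝ => (2*Real.log 2 - 2*Real.log (1+Real.sqrt (1-x)))/x) 1 := by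
      apply ContinuousAt.div
      · apply ContinuousAt.sub continuousAt_const
        apply ContinuousAt.mul continuousAt_const
        apply ContinuousAt.log
        · exact continuousAt_const.add
            ((Real.continuous_sqrt.continuousAt).comp (continuousAt_const.sub continuousAt_id))
        · norm_num
      · exact continuousAt_id
      · norm_num
    have h2 := hc.tendsto
    rw [hG1] at h2
    exact h2.mono_left nhdsWithin_le_nhds
  have htend2 : Filter.Tendsto (fun x : ℝ => ∑' n, f n * x ^ n)
      (nhdsWithin 1 (Set.Iio 1)) (nhds (2*Real.log 2)) := by
    apply hlim2.congr'
    filter_upwards [Ioo_mem_nhdsLT_of_mem (Set.mem_Ioc.mpr ⟨zero_lt_one, le_refl (1:ℝ)⟩)] with x hx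
    exact (heq x hx).symm
  exact tendsto_nhds_unique habel htend2
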